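/- Let f be a convex differentiable function on a convex set containing the density matrices, ρ a positive definite density matrix, and suppose f(ρ') ≤ f(ρ) + ⟨∇f(ρ), ρ'-ρ⟩ + ∥ρ'-ρ∥_ρ² for all density matrices ρ' with ∥ρ'-ρ∥_ρ ≤ 1/2. If G := ∇f(ρ) + α I satisfies tr(ρGρ) = 0 and ∥G∥_{ρ,*} ≤ 1, then (1/4)∥G∥_{ρ,*}² ≤ f(ρ) - min_{ρ' density matrix} f(ρ'). -/

import Mathlib

open Matrix
open scoped ComplexOrder

namespace Matrix.PosSemidef

/-- The positive semidefinite square root of a positive semidefinite matrix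
(the definition removed from Mathlib, restored with its old meaning). -/
noncomputable def sqrt {n 𝕜 : Type*} [Fintype n] [DecidableEq n] [RCLike 𝕜] {A : Matrix n n 𝕜}
    (hA : PosSemidef A) : Matrix n n 𝕜 :=
  hA.1.eigenvectorUnitary.1 * diagonal ((↑) ∘ (√·) ∘ hA.1.eigenvalues) *
  (star hA.1.eigenvectorUnitary : Matrix n n 𝕜)

end Matrix.PosSemidef

namespace Stmt11
variable {d : ℕ}

attribute [local instance] Matrix.normedAddCommGroup Matrix.normedSpace

lemma diag_nonneg {A : Matrix (Fin d) (Fin d) ℂ} (hA : A.PosSemidef) (i : Fin d) :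
    0 ≤ A i i := by
  have := hA.dotProduct_mulVec_nonneg (Pi.single i 1)
  simpa [Matrix.mulVec_single, dotProduct, Pi.single_apply] using this

lemma trace_nonneg' {A : Matrix (Fin d) (Fin d) ℂ} (hA : A.PosSemidef) :
    0 ≤ Matrix.trace A :=
  Finset.sum_nonneg fun i _ => diag_nonneg hA i

lemma herm_entry {A : Matrix (Fin d) (Fin d) ℂ} (hA : A.IsHermitian) (i j : Fin d) :
    A j i = star (A i j) := by
  conv_lhs => rw [← hA.eq]
  simp [Matrix.conjTranspose_apply]

lemma star_single (k : Fin d) (a : ℂ) :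
    star (Pi.single k a) = (Pi.single k (star a) : Fin d → ℂ) := by
  ext l
  rcases eq_or_ne l k with h | h <;> simp [Pi.single_apply, h]

lemma expand_quad (A : Matrix (Fin d) (Fin d) ℂ) (i j : Fin d) (c : ℂ) :
    star (Pi.single i (1:ℂ) + Pi.single j c) ⬝ᵥ A *ᵥ (Pi.single i (1:ℂ) + Pi.single j c)
      = (A i i + A i j * c) + star c * (A j i + A j j * c) := by
  simp only [Matrix.mulVec_add, Matrix.mulVec_single, star_add, star_single,
    add_dotProduct, dotProduct, Pi.add_apply, Pi.single_apply, add_mul,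
    ite_mul, one_mul, zero_mul, apply_ite (starRingEnd ℂ), map_zero, star_one,
    Finset.sum_add_distrib, Finset.sum_ite_eq', Finset.mem_univ, if_true, Pi.smul_apply, Matrix.col_apply, MulOpposite.smul_eq_mul_unop, MulOpposite.unop_op]
  ring

lemma entry_bound {A : Matrix (Fin d) (Fin d) ℂ} (hA : A.PosSemidef)
    (h1 : Matrix.trace A = 1) (i j : Fin d) : ‖A i j‖ ≤ 2 := by
  have hdiag : ∀ k, 0 ≤ (A k k).re ∧ (A k k).im = 0 := by
    intro k
    have := Complex.nonneg_iff.mp (diag_nonneg hA k)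
    exact ⟨this.1, this.2.symm⟩
  have hsum : ∑ k, (A k k).re = 1 := by
    have := congrArg Complex.re h1
    simpa [Matrix.trace, Matrix.diag, Complex.re_sum] using this
  have hkk : ∀ k, (A k k).re ≤ 1 := by
    intro k
    rw [← hsum]
    exact Finset.single_le_sum (fun l _ => (hdiag l).1) (Finset.mem_univ k)
  have key : ∀ c : ℂ, 0 ≤ ((A i i + A i j * c) + star c * (A j i + A j j * c)).re := by
    intro c
    rw [← expand_quad A i j c]
    exact (Complex.nonneg_iff.mp (hA.dotProduct_mulVec_nonneg _)).1
  have hji : A j i = star (A i j) := herm_entry hA.1 i j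
  set z := A i j with hz
  have h1' := key 1
  have h2' := key (-1)
  have h3' := key Complex.I
  have h4' := key (-Complex.I)
  rw [hji] at h1' h2' h3' h4'
  simp only [Complex.add_re, Complex.mul_re, Complex.one_re, Complex.one_im, Complex.neg_re,
    Complex.neg_im, Complex.I_re, Complex.I_im, star_one, Complex.star_def,
    Complex.conj_re, Complex.conj_im, map_neg, Complex.conj_I, Complex.add_im,
    Complex.mul_im, (hdiag i).2, (hdiag j).2] at h1' h2' h3' h4'
  have hb : |z.re| + |z.im| ≤ 2 := by
    have hii := (hdiag i).1
    have hjj := (hdiag j).1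
    have hi1 := hkk i
    have hj1 := hkk j
    cases abs_cases z.re with
    | inl h => cases abs_cases z.im with
      | inl h' => nlinarith [h2', h3']
      | inr h' => nlinarith [h2', h4']
    | inr h => cases abs_cases z.im with
      | inl h' => nlinarith [h1', h3']
      | inr h' => nlinarith [h1', h4']
  calc ‖z‖ ≤ |z.re| + |z.im| := Complex.norm_le_abs_re_add_abs_im z
  _ ≤ 2 := hb

lemma isClosed_nonnegcone : IsClosed {z : ℂ | 0 ≤ z} := by
  have : {z : ℂ | 0 ≤ z} = Complex.re ⁻¹' Set.Ici 0 ∩ Complex.im ⁻¹' {0} := by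
    ext z; simp [Complex.nonneg_iff, eq_comm]
  rw [this]
  exact (isClosed_Ici.preimage Complex.continuous_re).inter
    (isClosed_singleton.preimage Complex.continuous_im)

noncomputable def lquad (x : Fin d → ℂ) : Matrix (Fin d) (Fin d) ℂ →ₗ[ℂ] ℂ where
  toFun σ := star x ⬝ᵥ σ *ᵥ x
  map_add' σ τ := by simp [Matrix.add_mulVec, dotProduct_add]
  map_smul' c σ := by simp [Matrix.smul_mulVec, dotProduct_smul]

noncomputable def lconj : Matrix (Fin d) (Fin d) ℂ →ₗ[ℝ] Matrix (Fin d) (Fin d) ℂ where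
  toFun σ := σᴴ
  map_add' σ τ := Matrix.conjTranspose_add σ τ
  map_smul' r σ := by
    ext i j
    simp [Matrix.conjTranspose_apply, star_smul]

lemma isClosed_density :
    IsClosed {σ : Matrix (Fin d) (Fin d) ℂ | σ.PosSemidef ∧ Matrix.trace σ = 1} := by
  have h1 : {σ : Matrix (Fin d) (Fin d) ℂ | σ.PosSemidef ∧ Matrix.trace σ = 1}
      = ({σ : Matrix (Fin d) (Fin d) ℂ | σᴴ = σ}
        ∩ ⋂ (x : Fin d → ℂ), {σ | 0 ≤ star x ⬝ᵥ σ *ᵥ x})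
        ∩ {σ | Matrix.trace σ = 1} := by
    ext σ
    simp only [Set.mem_setOf_eq, Set.mem_inter_iff, Set.mem_iInter]
    exact ⟨fun h => ⟨⟨h.1.1, fun x => h.1.dotProduct_mulVec_nonneg x⟩, h.2⟩, fun h => ⟨Matrix.PosSemidef.of_dotProduct_mulVec_nonneg h.1.1 h.1.2, h.2⟩⟩
  rw [h1]
  have hconjc : Continuous (fun σ : Matrix (Fin d) (Fin d) ℂ => σᴴ) :=
    lconj.continuous_of_finiteDimensional
  have htr : Continuous (fun σ : Matrix (Fin d) (Fin d) ℂ => Matrix.trace σ) :=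
    ((Matrix.traceLinearMap (Fin d) ℂ ℂ).restrictScalars ℝ).continuous_of_finiteDimensional
  refine IsClosed.inter (IsClosed.inter ?_ ?_) ?_
  · exact isClosed_eq hconjc continuous_id
  · refine isClosed_iInter fun x => ?_
    have : Continuous (fun σ : Matrix (Fin d) (Fin d) ℂ => star x ⬝ᵥ σ *ᵥ x) :=
      ((lquad x).restrictScalars ℝ).continuous_of_finiteDimensional
    exact isClosed_nonnegcone.preimage this
  · exact isClosed_eq htr continuous_const

lemma isCompact_density :
    IsCompact {σ : Matrix (Fin d) (Fin d) ℂ | σ.PosSemidef ∧ Matrix.trace σ = 1} := by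
  refine Metric.isCompact_of_isClosed_isBounded isClosed_density ?_
  refine (Metric.isBounded_closedBall (x := (0 : Matrix (Fin d) (Fin d) ℂ)) (r := 2)).subset ?_
  intro σ hσ
  rw [Metric.mem_closedBall, dist_zero_right]
  exact (Matrix.norm_le_iff (by norm_num)).mpr fun i j => entry_bound hσ.1 hσ.2 i j

lemma bddBelow_density (f : Matrix (Fin d) (Fin d) ℂ → ℝ) (hconv : ConvexOn ℝ Set.univ f) :
    BddBelow (f '' {σ : Matrix (Fin d) (Fin d) ℂ | σ.PosSemidef ∧ Matrix.trace σ = 1}) :=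
  (isCompact_density.image_of_continuousOn
    ((hconv.continuousOn isOpen_univ).mono (Set.subset_univ _))).bddBelow

lemma sqrt_herm {A : Matrix (Fin d) (Fin d) ℂ} (hA : A.PosSemidef) : (hA.sqrt)ᴴ = hA.sqrt := by
  simp only [Matrix.PosSemidef.sqrt, Matrix.star_eq_conjTranspose, conjTranspose_mul, conjTranspose_conjTranspose, diagonal_conjTranspose, Matrix.mul_assoc]
  congr 3
  ext i
  simp

lemma sqrt_mul_self' {A : Matrix (Fin d) (Fin d) ℂ} (hA : A.PosSemidef) : hA.sqrt * hA.sqrt = A := by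
  have hVV' : (star hA.1.eigenvectorUnitary : Matrix (Fin d) (Fin d) ℂ) * hA.1.eigenvectorUnitary.1 = 1 :=
    Matrix.mem_unitaryGroup_iff'.mp hA.1.eigenvectorUnitary.2
  have hs := hA.1.spectral_theorem
  rw [Unitary.conjStarAlgAut_apply] at hs
  conv_rhs => rw [hs]
  simp only [Matrix.PosSemidef.sqrt, Matrix.mul_assoc]
  rw [← Matrix.mul_assoc (star _ : Matrix (Fin d) (Fin d) ℂ), hVV', Matrix.one_mul, ← Matrix.mul_assoc (diagonal _), diagonal_mul_diagonal]
  congr 3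
  ext i
  simp only [Function.comp]
  exact_mod_cast congrArg (fun x : ℝ => (x : ℂ)) (Real.mul_self_sqrt (hA.eigenvalues_nonneg i))

end Stmt11

set_option maxHeartbeats 2000000

/-- Self-bounding property: if `f` is convex and satisfies the relative-smoothness bound on
the local-norm half-ball around the positive definite density matrix `ρ`, and
`G = ∇f(ρ) + αI` satisfies `tr(ρGρ) = 0` and `∥G∥_{ρ,*} ≤ 1`, then
`(1/4)∥G∥_{ρ,*}² ≤ f(ρ) - min f` over density matrices. -/
theorem stmt_11 {d : ℕ} (f : Matrix (Fin d) (Fin d) ℂ → ℝ)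
    (gradf : Matrix (Fin d) (Fin d) ℂ)
    (hconv : ConvexOn ℝ Set.univ f)
    (ρ : Matrix (Fin d) (Fin d) ℂ) (hρ : ρ.PosDef) (hρ1 : Matrix.trace ρ = 1)
    (α : ℝ)
    (hsmooth : ∀ ρ' : Matrix (Fin d) (Fin d) ℂ, ρ'.PosSemidef → Matrix.trace ρ' = 1 →
      Real.sqrt ((Matrix.trace (((hρ.posSemidef.sqrt)⁻¹ * (ρ' - ρ) * (hρ.posSemidef.sqrt)⁻¹) ^ 2)).re) ≤ 1 / 2 →
      f ρ' ≤ f ρ + (Matrix.trace (gradf * (ρ' - ρ))).re +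
        (Matrix.trace (((hρ.posSemidef.sqrt)⁻¹ * (ρ' - ρ) * (hρ.posSemidef.sqrt)⁻¹) ^ 2)).re)
    (hc : Matrix.trace (ρ * (gradf + (α : ℂ) • 1) * ρ) = 0)
    (hb : Real.sqrt ((Matrix.trace ((hρ.posSemidef.sqrt * (gradf + (α : ℂ) • 1) * hρ.posSemidef.sqrt) ^ 2)).re) ≤ 1) :
    (1 / 4) * (Matrix.trace ((hρ.posSemidef.sqrt * (gradf + (α : ℂ) • 1) * hρ.posSemidef.sqrt) ^ 2)).re
      ≤ f ρ - sInf (f '' {σ | σ.PosSemidef ∧ Matrix.trace σ = 1}) := by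
  classical
  set D := {σ : Matrix (Fin d) (Fin d) ℂ | σ.PosSemidef ∧ Matrix.trace σ = 1} with hD
  have hbdd : BddBelow (f '' D) := Stmt11.bddBelow_density f hconv
  have hρD : ρ ∈ D := ⟨hρ.posSemidef, hρ1⟩
  have hlb : ∀ σ ∈ D, sInf (f '' D) ≤ f σ := fun σ hσ => csInf_le hbdd ⟨σ, hσ, rfl⟩
  have hsqH0 : (hρ.posSemidef.sqrt)ᴴ = hρ.posSemidef.sqrt := Stmt11.sqrt_herm hρ.posSemidef
  have hsqmul0 : hρ.posSemidef.sqrt * hρ.posSemidef.sqrt = ρ := Stmt11.sqrt_mul_self' hρ.posSemidef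
  obtain ⟨sq, hgen⟩ : ∃ sq, hρ.posSemidef.sqrt = sq := ⟨_, rfl⟩
  rw [hgen] at hsqH0 hsqmul0 hsmooth hb ⊢
  have hsqH : sqᴴ = sq := hsqH0
  have hsqmul : sq * sq = ρ := hsqmul0
  have hρH : ρᴴ = ρ := hρ.1
  have hdet : IsUnit sq.det := by
    have h2 : sq.det * sq.det = ρ.det := by rw [← Matrix.det_mul, hsqmul]
    have hρ0 : ρ.det ≠ 0 := hρ.det_pos.ne'
    rw [isUnit_iff_ne_zero]
    intro h
    rw [h, mul_zero] at h2
    exact hρ0 h2.symm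
  have hinv1 : sq⁻¹ * sq = 1 := Matrix.nonsing_inv_mul _ hdet
  have hinv2 : sq * sq⁻¹ = 1 := Matrix.mul_nonsing_inv _ hdet
  set G := gradf + (α : ℂ) • (1 : Matrix (Fin d) (Fin d) ℂ) with hG
  set S := sq * G * sq with hS
  have hSH : Sᴴ = sq * Gᴴ * sq := by
    rw [hS, Matrix.conjTranspose_mul, Matrix.conjTranspose_mul, hsqH, Matrix.mul_assoc]
  set T := (2⁻¹ : ℝ) • (S + Sᴴ) with hT
  have hTH : Tᴴ = T := by
    rw [hT, Matrix.conjTranspose_smul, Matrix.conjTranspose_add, Matrix.conjTranspose_conjTranspose]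
    rw [star_trivial, add_comm]
  set K := S - T with hK
  have hST2 : S + Sᴴ = (2 : ℝ) • T := by
    rw [hT, smul_smul]
    norm_num
  have hKH : Kᴴ = -K := by
    have hSHe : Sᴴ = (2 : ℝ) • T - S := by rw [← hST2]; abel
    rw [hK, Matrix.conjTranspose_sub, hTH, hSHe, two_smul]
    abel
  have hSdecomp : S = T + K := by rw [hK]; abel
  -- basic trace identities
  have trSρ : Matrix.trace (S * ρ) = 0 := by
    have h1 : S * ρ = sq * (G * (sq * ρ)) := by rw [hS]; simp only [Matrix.mul_assoc]
    calc Matrix.trace (S * ρ) = Matrix.trace (sq * (G * (sq * ρ))) := by rw [h1]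
    _ = Matrix.trace ((G * (sq * ρ)) * sq) := Matrix.trace_mul_comm _ _
    _ = Matrix.trace (G * (sq * ρ * sq)) := by
        congr 1
        simp only [Matrix.mul_assoc]
    _ = Matrix.trace ((sq * ρ * sq) * G) := Matrix.trace_mul_comm _ _
    _ = Matrix.trace (ρ * ρ * G) := by
        rw [← hsqmul]
        congr 1
        simp only [Matrix.mul_assoc]
    _ = Matrix.trace (ρ * G * ρ) := (Matrix.trace_mul_cycle ρ G ρ).symm
    _ = 0 := hc
  have trSHρ : Matrix.trace (Sᴴ * ρ) = 0 := by
    calc Matrix.trace (Sᴴ * ρ) = Matrix.trace (Sᴴ * ρᴴ) := by rw [hρH]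
    _ = Matrix.trace ((ρ * S)ᴴ) := by rw [Matrix.conjTranspose_mul ρ S]
    _ = star (Matrix.trace (ρ * S)) := Matrix.trace_conjTranspose _
    _ = star (Matrix.trace (S * ρ)) := by rw [Matrix.trace_mul_comm]
    _ = 0 := by rw [trSρ, star_zero]
  have trTρ : Matrix.trace (T * ρ) = 0 := by
    rw [hT, Matrix.smul_mul, Matrix.add_mul, Matrix.trace_smul, Matrix.trace_add, trSρ, trSHρ]
    simp
  have trD' : Matrix.trace (sq * T * sq) = 0 := by
    rw [Matrix.trace_mul_cycle, hsqmul, Matrix.trace_mul_comm, trTρ]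
  -- reality and positivity facts
  have himag : ∀ z : ℂ, star z = -z → z.re = 0 := by
    intro z h
    have := congrArg Complex.re h
    simp only [Complex.star_def, Complex.conj_re, Complex.neg_re] at this
    linarith
  have hreal : ∀ z : ℂ, star z = z → z = ((z.re : ℝ) : ℂ) := by
    intro z h
    exact (Complex.conj_eq_iff_re.mp h).symm
  have trTT_star : star (Matrix.trace (T * T)) = Matrix.trace (T * T) := by
    rw [← Matrix.trace_conjTranspose, Matrix.conjTranspose_mul, hTH]
  set t2 := (Matrix.trace (T * T)).re with ht2
  have trTT_real : Matrix.trace (T * T) = ((t2 : ℝ) : ℂ) := hreal _ trTT_star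
  have trTK_re : (Matrix.trace (T * K)).re = 0 := by
    apply himag
    rw [← Matrix.trace_conjTranspose, Matrix.conjTranspose_mul, hKH, hTH]
    rw [Matrix.neg_mul, Matrix.trace_neg, Matrix.trace_mul_comm]
  have trKT_re : (Matrix.trace (K * T)).re = 0 := by
    rw [Matrix.trace_mul_comm]; exact trTK_re
  have trKK_re : (Matrix.trace (K * K)).re ≤ 0 := by
    have h1 : K * K = -(K * Kᴴ) := by rw [hKH, Matrix.mul_neg, neg_neg]
    have h2 : 0 ≤ Matrix.trace (K * Kᴴ) := Stmt11.trace_nonneg' (Matrix.posSemidef_self_mul_conjTranspose K)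
    have h3 := (Complex.nonneg_iff.mp h2).1
    rw [h1, Matrix.trace_neg, Complex.neg_re]
    linarith
  -- reS2 ≤ t2
  have hS2 : (Matrix.trace (S ^ 2)).re ≤ t2 := by
    have hexp : S ^ 2 = T * T + (T * K + (K * T + K * K)) := by
      rw [pow_two, hSdecomp]
      simp only [Matrix.add_mul, Matrix.mul_add]
      abel
    rw [hexp]
    simp only [Matrix.trace_add, Complex.add_re, trTK_re, trKT_re]
    linarith [trKK_re]
  set rs := (Matrix.trace (S ^ 2)).re with hrs
  -- re trace (S*T) = t2
  have trST_re : (Matrix.trace (S * T)).re = t2 := by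
    rw [hSdecomp, Matrix.add_mul, Matrix.trace_add, Complex.add_re, trKT_re, add_zero, ht2]
  -- spectral data for T
  have hTherm : T.IsHermitian := hTH
  set ev := hTherm.eigenvalues with hev
  set V := (hTherm.eigenvectorUnitary : Matrix (Fin d) (Fin d) ℂ) with hV
  have hVV : V * star V = 1 := Matrix.mem_unitaryGroup_iff.mp hTherm.eigenvectorUnitary.2
  have hVV' : star V * V = 1 := Matrix.mem_unitaryGroup_iff'.mp hTherm.eigenvectorUnitary.2
  set Dg := Matrix.diagonal (RCLike.ofReal ∘ ev : Fin d → ℂ) with hDg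
  have hspec : T = V * Dg * star V := by
    have := hTherm.spectral_theorem; rwa [Unitary.conjStarAlgAut_apply] at this
  have hcancel : ∀ X : Matrix (Fin d) (Fin d) ℂ, star V * (V * X) = X := by
    intro X
    rw [← Matrix.mul_assoc, hVV', Matrix.one_mul]
  have hTT : T * T = V * (Dg * Dg) * star V := by
    conv_lhs => rw [hspec]
    simp only [Matrix.mul_assoc]
    rw [hcancel]
  have ht2sum : t2 = ∑ i, ev i ^ 2 := by
    have h1 : Matrix.trace (T * T) = Matrix.trace (Dg * Dg) := by
      rw [hTT, Matrix.trace_mul_cycle, ← Matrix.mul_assoc, hVV', Matrix.one_mul]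
    have h2 : Matrix.trace (Dg * Dg) = ∑ i, ((ev i : ℂ) * (ev i : ℂ)) := by
      rw [hDg, Matrix.diagonal_mul_diagonal, Matrix.trace_diagonal]
      simp [Function.comp]
    rw [ht2, h1, h2]
    push_cast
    rw [Complex.re_sum]
    apply Finset.sum_congr rfl
    intro i _
    rw [pow_two]
    simp [Complex.mul_re]
  have ht2nn : 0 ≤ t2 := by
    rw [ht2sum]
    exact Finset.sum_nonneg fun i _ => sq_nonneg _
  have hevbound : ∀ i, |ev i| ≤ Real.sqrt t2 := by
    intro i
    rw [← Real.sqrt_sq_eq_abs]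
    apply Real.sqrt_le_sqrt
    rw [ht2sum]
    exact Finset.single_le_sum (fun j _ => sq_nonneg (ev j)) (Finset.mem_univ i)
  -- main key inequality
  have key : ∀ β : ℝ, 0 ≤ β → β * Real.sqrt t2 ≤ 1 / 2 →
      (β - β ^ 2) * t2 ≤ f ρ - sInf (f '' D) := by
    intro β hβ0 hβs
    set ρ' := ρ - β • (sq * T * sq) with hρ'
    have hdiff : ρ' - ρ = -(β • (sq * T * sq)) := by rw [hρ']; abel
    -- trace one
    have htr1 : Matrix.trace ρ' = 1 := by
      rw [hρ', Matrix.trace_sub, Matrix.trace_smul, trD', smul_zero, sub_zero, hρ1]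
    -- PSD
    have hmid : (1 - β • T).PosSemidef := by
      have hDpos : (Matrix.diagonal (fun i => ((1 - β * ev i : ℝ) : ℂ))).PosSemidef := by
        rw [Matrix.posSemidef_diagonal_iff]
        intro i
        rw [Complex.zero_le_real]
        have h1 : β * ev i ≤ β * |ev i| := by
          apply mul_le_mul_of_nonneg_left (le_abs_self _) hβ0
        have h2 : β * |ev i| ≤ β * Real.sqrt t2 :=
          mul_le_mul_of_nonneg_left (hevbound i) hβ0
        linarith
      have hDeq : Matrix.diagonal (fun i => ((1 - β * ev i : ℝ) : ℂ)) = 1 - β • Dg := by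
        ext i j
        rcases eq_or_ne i j with h | h
        · subst h
          simp [hDg, Matrix.diagonal_apply_eq, Matrix.one_apply_eq, Matrix.sub_apply,
            Matrix.smul_apply, Complex.real_smul]
        · simp [hDg, Matrix.diagonal_apply_ne _ h, Matrix.one_apply_ne h, Matrix.sub_apply,
            Matrix.smul_apply]
      have heq : 1 - β • T = V * Matrix.diagonal (fun i => ((1 - β * ev i : ℝ) : ℂ)) * star V := by
        rw [hDeq, Matrix.mul_sub, Matrix.sub_mul, Matrix.mul_one, hVV]
        rw [Matrix.mul_smul, Matrix.smul_mul, ← hspec]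
      rw [heq]
      have := hDpos.mul_mul_conjTranspose_same V
      rwa [← Matrix.star_eq_conjTranspose] at this
    have hρ'eq : ρ' = sq * (1 - β • T) * sq := by
      have h1 : sq * (1 - β • T) * sq = sq * sq - β • (sq * T * sq) := by
        rw [Matrix.mul_sub, Matrix.sub_mul, Matrix.mul_one, Matrix.mul_smul, Matrix.smul_mul]
      rw [hρ', h1, hsqmul]
    have hρ'psd : ρ'.PosSemidef := by
      rw [hρ'eq]
      have := hmid.mul_mul_conjTranspose_same sq
      rwa [hsqH] at this
    -- the normalized difference
    have hnd : sq⁻¹ * (ρ' - ρ) * sq⁻¹ = -(β • T) := by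
      rw [hdiff, Matrix.mul_neg, Matrix.neg_mul, Matrix.mul_smul, Matrix.smul_mul]
      congr 2
      calc sq⁻¹ * (sq * T * sq) * sq⁻¹ = sq⁻¹ * sq * T * (sq * sq⁻¹) := by
            simp only [Matrix.mul_assoc]
      _ = T := by rw [hinv1, hinv2, Matrix.one_mul, Matrix.mul_one]
    have hndsq : (sq⁻¹ * (ρ' - ρ) * sq⁻¹) ^ 2 = (β ^ 2) • (T * T) := by
      rw [hnd, neg_sq, smul_pow, pow_two T]
    have hndre : (Matrix.trace ((sq⁻¹ * (ρ' - ρ) * sq⁻¹) ^ 2)).re = β ^ 2 * t2 := by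
      rw [hndsq, Matrix.trace_smul, trTT_real, Complex.real_smul, ← Complex.ofReal_mul]
      exact Complex.ofReal_re _
    have hhalf : Real.sqrt ((Matrix.trace ((sq⁻¹ * (ρ' - ρ) * sq⁻¹) ^ 2)).re) ≤ 1 / 2 := by
      rw [hndre]
      have : Real.sqrt (β ^ 2 * t2) = β * Real.sqrt t2 := by
        rw [Real.sqrt_mul (sq_nonneg β), Real.sqrt_sq hβ0]
      rw [this]
      exact hβs
    -- gradient term
    have hgradf : gradf = G - (α : ℂ) • 1 := by rw [hG]; abel
    have hGD' : Matrix.trace (G * (sq * T * sq)) = Matrix.trace (S * T) := by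
      rw [← Matrix.mul_assoc, Matrix.trace_mul_cycle, hS]
      congr 1
      simp only [Matrix.mul_assoc]
    have hgrad : (Matrix.trace (gradf * (ρ' - ρ))).re = -(β * t2) := by
      rw [hdiff, Matrix.mul_neg, Matrix.trace_neg, Matrix.mul_smul, Matrix.trace_smul]
      rw [hgradf, Matrix.sub_mul, Matrix.trace_sub, Matrix.smul_mul, Matrix.one_mul,
        Matrix.trace_smul, trD', smul_zero, sub_zero, hGD']
      simp only [Complex.neg_re, Complex.real_smul, Complex.mul_re, Complex.ofReal_re,
        Complex.ofReal_im]
      rw [trST_re]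
      ring
    have hsm := hsmooth ρ' hρ'psd htr1 hhalf
    rw [hgrad, hndre] at hsm
    have hfρ' : sInf (f '' D) ≤ f ρ' := hlb ρ' ⟨hρ'psd, htr1⟩
    nlinarith [hsm, hfρ']
  -- conclusion
  rcases le_or_gt rs 0 with h0 | h0
  · have h1 : sInf (f '' D) ≤ f ρ := hlb ρ hρD
    nlinarith
  · have hrs1 : rs ≤ 1 := by
      have h1 : Real.sqrt rs ^ 2 = rs := Real.sq_sqrt h0.le
      nlinarith [hb, Real.sqrt_nonneg rs]
    rcases le_or_gt t2 1 with ht | ht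
    · have hs1 : Real.sqrt t2 ≤ 1 := by
        rw [show (1:ℝ) = Real.sqrt 1 by simp]
        exact Real.sqrt_le_sqrt ht
      have h := key (1/2) (by norm_num) (by linarith)
      nlinarith [hS2]
    · set s := Real.sqrt t2 with hsdef
      have hs2 : s ^ 2 = t2 := Real.sq_sqrt ht2nn
      have hs1 : 1 < s := by
        nlinarith [Real.sqrt_nonneg t2]
      have hs0 : 0 < s := by linarith
      have hsne : s ≠ 0 := hs0.ne'
      have hβval : (1/(2*s)) * s = 1/2 := by
        field_simp
      have h := key (1/(2*s)) (by positivity) (le_of_eq hβval)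
      rw [← hs2] at h
      have hfin : (1/4) * rs ≤ (1/(2*s) - (1/(2*s)) ^ 2) * s ^ 2 := by
        have hexpand : (1/(2*s) - (1/(2*s)) ^ 2) * s ^ 2 = s/2 - 1/4 := by
          field_simp
          ring
        rw [hexpand]
        nlinarith
      linarith
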